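/- Theorem 4 (ρ_{S2} for 2-D mapping): let N = 2M with M ≥ 2, let σ be a uniformly random permutation of Fin N, X_i = u (σ i), and define the symbol energy E_w = X_{2w}² + X_{2w+1}² for w : Fin M. Then for any two distinct symbol times w ≠ w', E[E_w · E_{w'}²] = 4ρ₂ + 4ρ₃, where ρ₂ = (N·m₂·m₄ − m₆)/(N − 1) and ρ₃ = (N²·m₂³ − 3N·m₂·m₄ + 2·m₆)/((N − 1)(N − 2)). -/

import Mathlib

/-- Expectation of a real-valued random variable on the finite probability space
`Equiv.Perm (Fin N)` equipped with the uniform probability measure. -/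
noncomputable def permExpect (N : ℕ) (f : Equiv.Perm (Fin N) → ℝ) : ℝ :=
  (∑ σ : Equiv.Perm (Fin N), f σ) / (Fintype.card (Equiv.Perm (Fin N)) : ℝ)

/-- Empirical `k`-th moment of the amplitude block `u`. -/
noncomputable def empMoment (N : ℕ) (u : Fin N → ℝ) (k : ℕ) : ℝ :=
  (1 / (N : ℝ)) * ∑ i : Fin N, (u i) ^ k

/-- Symbol energy under 2-D mapping: `E_w = X_{2w}² + X_{2w+1}²` with `X_i = u (σ i)`,
for a block of length `N = 2M`. -/
noncomputable def energy2D (M : ℕ) (u : Fin (2 * M) → ℝ)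
    (σ : Equiv.Perm (Fin (2 * M))) (w : Fin M) : ℝ :=
  (u (σ ⟨2 * w.val, by have := w.isLt; omega⟩)) ^ 2
    + (u (σ ⟨2 * w.val + 1, by have := w.isLt; omega⟩)) ^ 2

open Finset Equiv

variable {N : ℕ}

/-- 2-transitivity of the symmetric group. -/
lemma exists_perm_two (i j a b : Fin N) (hij : i ≠ j) (hab : a ≠ b) :
    ∃ π : Equiv.Perm (Fin N), π i = a ∧ π j = b := by
  classical
  set π₁ := Equiv.swap i a with hπ₁
  have h1 : π₁ i = a := Equiv.swap_apply_left i a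
  set j₁ := π₁ j with hj₁
  have hj₁a : j₁ ≠ a := by
    intro h
    exact hij (π₁.injective (by rw [h1, ← hj₁]; exact h.symm))
  refine ⟨(Equiv.swap j₁ b) * π₁, ?_, ?_⟩
  · simp only [Equiv.Perm.mul_apply, h1]
    exact Equiv.swap_apply_of_ne_of_ne (Ne.symm hj₁a) hab
  · simp only [Equiv.Perm.mul_apply, ← hj₁]
    exact Equiv.swap_apply_left j₁ b

/-- 3-transitivity of the symmetric group. -/
lemma exists_perm_three (i j k a b c : Fin N)
    (hij : i ≠ j) (hik : i ≠ k) (hjk : j ≠ k)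
    (hab : a ≠ b) (hac : a ≠ c) (hbc : b ≠ c) :
    ∃ π : Equiv.Perm (Fin N), π i = a ∧ π j = b ∧ π k = c := by
  classical
  obtain ⟨π₂, h2a, h2b⟩ := exists_perm_two i j a b hij hab
  set k₂ := π₂ k with hk₂
  have hk₂a : k₂ ≠ a := fun h => hik (π₂.injective (by rw [h2a, ← hk₂]; exact h.symm))
  have hk₂b : k₂ ≠ b := fun h => hjk (π₂.injective (by rw [h2b, ← hk₂]; exact h.symm))
  refine ⟨(Equiv.swap k₂ c) * π₂, ?_, ?_, ?_⟩
  · simp only [Equiv.Perm.mul_apply, h2a]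
    exact Equiv.swap_apply_of_ne_of_ne (Ne.symm hk₂a) hac
  · simp only [Equiv.Perm.mul_apply, h2b]
    exact Equiv.swap_apply_of_ne_of_ne (Ne.symm hk₂b) hbc
  · simp only [Equiv.Perm.mul_apply, ← hk₂]
    exact Equiv.swap_apply_left k₂ c

/-- The sum over permutations depends only on distinctness of the pair. -/
lemma const_two (F : Fin N → Fin N → ℝ) {i j a b : Fin N} (hij : i ≠ j) (hab : a ≠ b) :
    ∑ σ : Equiv.Perm (Fin N), F (σ i) (σ j) = ∑ σ : Equiv.Perm (Fin N), F (σ a) (σ b) := by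
  obtain ⟨π, hπa, hπb⟩ := exists_perm_two a b i j hab hij
  exact Fintype.sum_equiv (Equiv.mulRight π) _ _ (fun σ => by
    simp [Equiv.Perm.mul_apply, hπa, hπb])

lemma const_three (F : Fin N → Fin N → Fin N → ℝ) {i j k a b c : Fin N}
    (hij : i ≠ j) (hik : i ≠ k) (hjk : j ≠ k)
    (hab : a ≠ b) (hac : a ≠ c) (hbc : b ≠ c) :
    ∑ σ : Equiv.Perm (Fin N), F (σ i) (σ j) (σ k)
      = ∑ σ : Equiv.Perm (Fin N), F (σ a) (σ b) (σ c) := by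
  obtain ⟨π, hπa, hπb, hπc⟩ := exists_perm_three a b c i j k hab hac hbc hij hik hjk
  exact Fintype.sum_equiv (Equiv.mulRight π) _ _ (fun σ => by
    simp [Equiv.Perm.mul_apply, hπa, hπb, hπc])

/-- Reindex a sum over an erased universe by a permutation. -/
lemma sum_erase_perm (σ : Equiv.Perm (Fin N)) (a : Fin N) (g : Fin N → ℝ) :
    ∑ b ∈ univ.erase a, g (σ b) = ∑ b ∈ univ.erase (σ a), g b := by
  classical
  rw [show univ.erase (σ a) = (univ.erase a).map σ.toEmbedding by
      rw [Finset.map_erase, Finset.map_univ_equiv]; rfl,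
    Finset.sum_map]
  rfl

lemma count_sum_two (F : Fin N → Fin N → ℝ) {i j : Fin N} (hij : i ≠ j) :
    ((N * (N - 1) : ℕ) : ℝ) * ∑ σ : Equiv.Perm (Fin N), F (σ i) (σ j)
      = (Fintype.card (Equiv.Perm (Fin N)) : ℝ)
        * ∑ a : Fin N, ∑ b ∈ univ.erase a, F a b := by
  classical
  have key : ∑ a : Fin N, ∑ b ∈ univ.erase a, ∑ σ : Equiv.Perm (Fin N), F (σ a) (σ b)
      = ((N * (N - 1) : ℕ) : ℝ) * ∑ σ : Equiv.Perm (Fin N), F (σ i) (σ j) := by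
    have : ∀ a : Fin N, ∀ b ∈ univ.erase a,
        ∑ σ : Equiv.Perm (Fin N), F (σ a) (σ b)
          = ∑ σ : Equiv.Perm (Fin N), F (σ i) (σ j) := by
      intro a b hb
      exact const_two F (Finset.ne_of_mem_erase hb).symm hij
    rw [Finset.sum_congr rfl (fun a _ => Finset.sum_congr rfl (this a))]
    simp [Finset.card_erase_of_mem, Finset.card_univ, Nat.cast_mul, mul_assoc]
  rw [← key]
  have swap : ∑ a : Fin N, ∑ b ∈ univ.erase a, ∑ σ : Equiv.Perm (Fin N), F (σ a) (σ b)
      = ∑ σ : Equiv.Perm (Fin N), ∑ a : Fin N, ∑ b ∈ univ.erase a, F (σ a) (σ b) := by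
    rw [Finset.sum_comm]
    exact Finset.sum_congr rfl (fun a _ => Finset.sum_comm)
  rw [swap]
  rw [Finset.sum_congr rfl (fun σ _ => ?_), Finset.sum_const, nsmul_eq_mul, Finset.card_univ]
  calc ∑ a : Fin N, ∑ b ∈ univ.erase a, F (σ a) (σ b)
      = ∑ a : Fin N, ∑ b ∈ univ.erase (σ a), F (σ a) b := by
        exact Finset.sum_congr rfl (fun a _ => sum_erase_perm σ a _)
    _ = ∑ a : Fin N, ∑ b ∈ univ.erase a, F a b :=
        Equiv.sum_comp σ (fun x => ∑ b ∈ univ.erase x, F x b)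

lemma count_sum_three (F : Fin N → Fin N → Fin N → ℝ) {i j k : Fin N}
    (hij : i ≠ j) (hik : i ≠ k) (hjk : j ≠ k) :
    ((N * ((N - 1) * (N - 2)) : ℕ) : ℝ) * ∑ σ : Equiv.Perm (Fin N), F (σ i) (σ j) (σ k)
      = (Fintype.card (Equiv.Perm (Fin N)) : ℝ)
        * ∑ a : Fin N, ∑ b ∈ univ.erase a, ∑ c ∈ (univ.erase a).erase b, F a b c := by
  classical
  have key : ∑ a : Fin N, ∑ b ∈ univ.erase a, ∑ c ∈ (univ.erase a).erase b,
        ∑ σ : Equiv.Perm (Fin N), F (σ a) (σ b) (σ c)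
      = ((N * ((N - 1) * (N - 2)) : ℕ) : ℝ)
        * ∑ σ : Equiv.Perm (Fin N), F (σ i) (σ j) (σ k) := by
    have step : ∀ a : Fin N, ∀ b ∈ univ.erase a, ∀ c ∈ (univ.erase a).erase b,
        ∑ σ : Equiv.Perm (Fin N), F (σ a) (σ b) (σ c)
          = ∑ σ : Equiv.Perm (Fin N), F (σ i) (σ j) (σ k) := by
      intro a b hb c hc
      have hba : b ≠ a := Finset.ne_of_mem_erase hb
      have hcb : c ≠ b := Finset.ne_of_mem_erase hc
      have hca : c ≠ a := Finset.ne_of_mem_erase (Finset.mem_of_mem_erase hc)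
      exact const_three F hba.symm hca.symm hcb.symm hij hik hjk
    rw [Finset.sum_congr rfl (fun a _ => Finset.sum_congr rfl
        (fun b hb => Finset.sum_congr rfl (step a b hb)))]
    have hcard : ∀ a : Fin N, ∀ b ∈ univ.erase a, ((univ.erase a).erase b).card = N - 2 := by
      intro a b hb
      rw [Finset.card_erase_of_mem hb, Finset.card_erase_of_mem (Finset.mem_univ a),
        Finset.card_univ, Fintype.card_fin]
      omega
    simp only [Finset.sum_const, nsmul_eq_mul]
    rw [Finset.sum_congr rfl (fun a _ => Finset.sum_congr rfl (fun b hb => by rw [hcard a b hb]))]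
    simp [Finset.card_erase_of_mem, Finset.card_univ, Nat.cast_mul, mul_assoc]
  rw [← key]
  have swap : ∑ a : Fin N, ∑ b ∈ univ.erase a, ∑ c ∈ (univ.erase a).erase b,
        ∑ σ : Equiv.Perm (Fin N), F (σ a) (σ b) (σ c)
      = ∑ σ : Equiv.Perm (Fin N), ∑ a : Fin N, ∑ b ∈ univ.erase a,
          ∑ c ∈ (univ.erase a).erase b, F (σ a) (σ b) (σ c) := by
    rw [Finset.sum_comm]
    exact Finset.sum_congr rfl (fun a _ => by
      rw [Finset.sum_comm]
      exact Finset.sum_congr rfl (fun b _ => Finset.sum_comm))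
  rw [swap]
  rw [Finset.sum_congr rfl (fun σ _ => ?_), Finset.sum_const, nsmul_eq_mul, Finset.card_univ]
  have inner2 : ∀ a b : Fin N, ∑ c ∈ (univ.erase a).erase b, F (σ a) (σ b) (σ c)
      = ∑ c ∈ (univ.erase (σ a)).erase (σ b), F (σ a) (σ b) c := by
    intro a b
    rw [show (univ.erase (σ a)).erase (σ b) = ((univ.erase a).erase b).map σ.toEmbedding by
        rw [Finset.map_erase, Finset.map_erase, Finset.map_univ_equiv]; rfl,
      Finset.sum_map]
    rfl
  calc ∑ a : Fin N, ∑ b ∈ univ.erase a, ∑ c ∈ (univ.erase a).erase b, F (σ a) (σ b) (σ c)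
      = ∑ a : Fin N, ∑ b ∈ univ.erase (σ a), ∑ c ∈ (univ.erase (σ a)).erase b, F (σ a) b c := by
        refine Finset.sum_congr rfl (fun a _ => ?_)
        rw [Finset.sum_congr rfl (fun b _ => inner2 a b)]
        exact sum_erase_perm σ a (fun x => ∑ c ∈ (univ.erase (σ a)).erase x, F (σ a) x c)
    _ = ∑ a : Fin N, ∑ b ∈ univ.erase a, ∑ c ∈ (univ.erase a).erase b, F a b c :=
        Equiv.sum_comp σ (fun x => ∑ b ∈ univ.erase x, ∑ c ∈ (univ.erase x).erase b, F x b c)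

lemma eval_two (g h : Fin N → ℝ) :
    ∑ a : Fin N, ∑ b ∈ univ.erase a, g a * h b
      = (∑ a, g a) * (∑ a, h a) - ∑ a, g a * h a := by
  classical
  have : ∀ a : Fin N, ∑ b ∈ univ.erase a, g a * h b = g a * ((∑ x, h x) - h a) := by
    intro a
    rw [← Finset.mul_sum, Finset.sum_erase_eq_sub (Finset.mem_univ a)]
  rw [Finset.sum_congr rfl (fun a _ => this a)]
  simp only [mul_sub]
  rw [Finset.sum_sub_distrib, ← Finset.sum_mul]

lemma eval_three (f : Fin N → ℝ) :
    ∑ a : Fin N, ∑ b ∈ univ.erase a, ∑ c ∈ (univ.erase a).erase b, f a * f b * f c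
      = (∑ a, f a) ^ 3 - 3 * (∑ a, f a) * (∑ a, f a ^ 2) + 2 * ∑ a, f a ^ 3 := by
  classical
  set S1 := ∑ a : Fin N, f a with hS1
  set S2 := ∑ a : Fin N, f a ^ 2 with hS2
  have inner : ∀ a : Fin N, ∀ b ∈ univ.erase a,
      ∑ c ∈ (univ.erase a).erase b, f a * f b * f c
        = f a * f b * (S1 - f a - f b) := by
    intro a b hb
    rw [← Finset.mul_sum, Finset.sum_erase_eq_sub hb,
      Finset.sum_erase_eq_sub (Finset.mem_univ a), ← hS1, sub_sub]
  have mid : ∀ a : Fin N, ∑ b ∈ univ.erase a, f a * f b * (S1 - f a - f b)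
      = f a * ((S1 - f a) * (S1 - f a) - (S2 - f a ^ 2)) := by
    intro a
    have e1 : ∑ b ∈ univ.erase a, f a * f b * (S1 - f a - f b)
        = f a * ∑ b ∈ univ.erase a, (f b * (S1 - f a) - f b ^ 2) := by
      rw [Finset.mul_sum]
      exact Finset.sum_congr rfl (fun b _ => by ring)
    rw [e1, Finset.sum_sub_distrib, ← Finset.sum_mul,
      Finset.sum_erase_eq_sub (Finset.mem_univ a),
      Finset.sum_erase_eq_sub (Finset.mem_univ a), ← hS1, ← hS2]
  rw [Finset.sum_congr rfl (fun a _ => by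
    rw [Finset.sum_congr rfl (inner a), mid a])]
  have expand : ∀ a : Fin N, f a * ((S1 - f a) * (S1 - f a) - (S2 - f a ^ 2))
      = f a * (S1 * S1) - f a ^ 2 * (2 * S1) + 2 * f a ^ 3 - f a * S2 := by
    intro a; ring
  rw [Finset.sum_congr rfl (fun a _ => expand a)]
  rw [Finset.sum_sub_distrib, Finset.sum_add_distrib, Finset.sum_sub_distrib,
    ← Finset.sum_mul, ← Finset.sum_mul, ← Finset.mul_sum, ← Finset.sum_mul, ← hS1, ← hS2]
  ring

set_option maxHeartbeats 1000000 in
/-- Theorem 4 (ρ_{S2} for 2-D mapping): for `N = 2M`, `M ≥ 2`, and distinct symbol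
times `w ≠ w'`, `E[E_w·E_{w'}²] = 4ρ₂ + 4ρ₃` with
`ρ₂ = (N·m₂·m₄ − m₆)/(N−1)` and `ρ₃ = (N²·m₂³ − 3N·m₂·m₄ + 2·m₆)/((N−1)(N−2))`. -/
theorem rhoS2_twoD (M : ℕ) (hM : 2 ≤ M) (u : Fin (2 * M) → ℝ)
    (w w' : Fin M) (hww' : w ≠ w') :
    permExpect (2 * M) (fun σ => energy2D M u σ w * (energy2D M u σ w') ^ 2)
      = 4 * ((((2 * M : ℕ) : ℝ) * empMoment (2 * M) u 2 * empMoment (2 * M) u 4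
              - empMoment (2 * M) u 6) / (((2 * M : ℕ) : ℝ) - 1))
        + 4 * ((((2 * M : ℕ) : ℝ) ^ 2 * (empMoment (2 * M) u 2) ^ 3
              - 3 * ((2 * M : ℕ) : ℝ) * empMoment (2 * M) u 2 * empMoment (2 * M) u 4
              + 2 * empMoment (2 * M) u 6)
            / ((((2 * M : ℕ) : ℝ) - 1) * (((2 * M : ℕ) : ℝ) - 2))) := by
  classical
  have hwv : (w : ℕ) ≠ (w' : ℕ) := fun h => hww' (Fin.ext h)
  have hw := w.isLt
  have hw' := w'.isLt
  have hn4 : 4 ≤ 2 * M := by omega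
  obtain ⟨i₁, hi₁⟩ : ∃ x : Fin (2 * M), x = ⟨2 * w.val, by omega⟩ := ⟨_, rfl⟩
  obtain ⟨i₂, hi₂⟩ : ∃ x : Fin (2 * M), x = ⟨2 * w.val + 1, by omega⟩ := ⟨_, rfl⟩
  obtain ⟨j₁, hj₁⟩ : ∃ x : Fin (2 * M), x = ⟨2 * w'.val, by omega⟩ := ⟨_, rfl⟩
  obtain ⟨j₂, hj₂⟩ : ∃ x : Fin (2 * M), x = ⟨2 * w'.val + 1, by omega⟩ := ⟨_, rfl⟩
  have d11' : i₁ ≠ j₁ := by rw [hi₁, hj₁]; simp only [ne_eq, Fin.mk.injEq]; omega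
  have d12' : i₁ ≠ j₂ := by rw [hi₁, hj₂]; simp only [ne_eq, Fin.mk.injEq]; omega
  have d21' : i₂ ≠ j₁ := by rw [hi₂, hj₁]; simp only [ne_eq, Fin.mk.injEq]; omega
  have d22' : i₂ ≠ j₂ := by rw [hi₂, hj₂]; simp only [ne_eq, Fin.mk.injEq]; omega
  have d1'2' : j₁ ≠ j₂ := by rw [hj₁, hj₂]; simp only [ne_eq, Fin.mk.injEq]; omega
  obtain ⟨K, hK⟩ : ∃ K : ℝ, K = (Fintype.card (Equiv.Perm (Fin (2 * M))) : ℝ) := ⟨_, rfl⟩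
  have hKpos : 0 < K := by rw [hK]; exact_mod_cast Fintype.card_pos
  have hK0 : K ≠ 0 := ne_of_gt hKpos
  have hnc : ((2 * M : ℕ) : ℝ) = 2 * (M : ℝ) := by push_cast; ring
  have hMR : (4 : ℝ) ≤ 2 * (M : ℝ) := by
    have : (2 : ℝ) ≤ (M : ℝ) := by exact_mod_cast hM
    linarith
  have hn0 : ((2 * M : ℕ) : ℝ) ≠ 0 := by rw [hnc]; linarith
  have hn1 : ((2 * M : ℕ) : ℝ) - 1 ≠ 0 := by rw [hnc]; intro h; linarith
  have hn2 : ((2 * M : ℕ) : ℝ) - 2 ≠ 0 := by rw [hnc]; intro h; linarith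
  obtain ⟨S2, hS2⟩ : ∃ x : ℝ, x = ∑ a : Fin (2 * M), u a ^ 2 := ⟨_, rfl⟩
  obtain ⟨S4, hS4⟩ : ∃ x : ℝ, x = ∑ a : Fin (2 * M), u a ^ 4 := ⟨_, rfl⟩
  obtain ⟨S6, hS6⟩ : ∃ x : ℝ, x = ∑ a : Fin (2 * M), u a ^ 6 := ⟨_, rfl⟩
  have cast2 : ((2 * M * (2 * M - 1) : ℕ) : ℝ)
      = ((2 * M : ℕ) : ℝ) * (((2 * M : ℕ) : ℝ) - 1) := by
    have h1 : 1 ≤ 2 * M := by omega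
    push_cast [h1]; ring
  have cast3 : ((2 * M * ((2 * M - 1) * (2 * M - 2)) : ℕ) : ℝ)
      = ((2 * M : ℕ) : ℝ) * ((((2 * M : ℕ) : ℝ) - 1) * (((2 * M : ℕ) : ℝ) - 2)) := by
    have h1 : 1 ≤ 2 * M := by omega
    have h2 : 2 ≤ 2 * M := by omega
    push_cast [h1, h2]; ring
  -- pair sums
  have pair : ∀ i j : Fin (2 * M), i ≠ j →
      ∑ σ : Equiv.Perm (Fin (2 * M)), u (σ i) ^ 2 * u (σ j) ^ 4
        = K * (S2 * S4 - S6) / (((2 * M : ℕ) : ℝ) * (((2 * M : ℕ) : ℝ) - 1)) := by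
    intro i j hij
    have h := count_sum_two (fun a b => u a ^ 2 * u b ^ 4) hij
    rw [eval_two (fun a => u a ^ 2) (fun a => u a ^ 4)] at h
    have h6 : ∑ a : Fin (2 * M), u a ^ 2 * u a ^ 4 = S6 := by
      rw [hS6]; exact Finset.sum_congr rfl (fun a _ => by ring)
    rw [h6, cast2, ← hS2, ← hS4, ← hK] at h
    rw [eq_div_iff (mul_ne_zero hn0 hn1)]
    linarith [h]
  -- triple sums
  have triple : ∀ i j k : Fin (2 * M), i ≠ j → i ≠ k → j ≠ k →
      ∑ σ : Equiv.Perm (Fin (2 * M)), u (σ i) ^ 2 * u (σ j) ^ 2 * u (σ k) ^ 2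
        = K * (S2 ^ 3 - 3 * S2 * S4 + 2 * S6)
          / (((2 * M : ℕ) : ℝ) * ((((2 * M : ℕ) : ℝ) - 1) * (((2 * M : ℕ) : ℝ) - 2))) := by
    intro i j k hij hik hjk
    have h := count_sum_three (fun a b c => u a ^ 2 * u b ^ 2 * u c ^ 2) hij hik hjk
    rw [eval_three (fun a => u a ^ 2)] at h
    have h4 : ∑ a : Fin (2 * M), (u a ^ 2) ^ 2 = S4 := by
      rw [hS4]; exact Finset.sum_congr rfl (fun a _ => by ring)
    have h6 : ∑ a : Fin (2 * M), (u a ^ 2) ^ 3 = S6 := by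
      rw [hS6]; exact Finset.sum_congr rfl (fun a _ => by ring)
    rw [h4, h6, cast3, ← hS2, ← hK] at h
    rw [eq_div_iff (mul_ne_zero hn0 (mul_ne_zero hn1 hn2))]
    linarith [h]
  -- expand the product
  have hexp : ∀ σ : Equiv.Perm (Fin (2 * M)),
      energy2D M u σ w * (energy2D M u σ w') ^ 2
        = u (σ i₁) ^ 2 * u (σ j₁) ^ 4 + u (σ i₁) ^ 2 * u (σ j₂) ^ 4
          + u (σ i₂) ^ 2 * u (σ j₁) ^ 4 + u (σ i₂) ^ 2 * u (σ j₂) ^ 4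
          + 2 * (u (σ i₁) ^ 2 * u (σ j₁) ^ 2 * u (σ j₂) ^ 2)
          + 2 * (u (σ i₂) ^ 2 * u (σ j₁) ^ 2 * u (σ j₂) ^ 2) := by
    intro σ
    rw [hi₁, hi₂, hj₁, hj₂]
    simp only [energy2D]
    ring
  have hsum : ∑ σ : Equiv.Perm (Fin (2 * M)),
      energy2D M u σ w * (energy2D M u σ w') ^ 2
        = 4 * (K * (S2 * S4 - S6) / (((2 * M : ℕ) : ℝ) * (((2 * M : ℕ) : ℝ) - 1)))
          + 4 * (K * (S2 ^ 3 - 3 * S2 * S4 + 2 * S6)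
            / (((2 * M : ℕ) : ℝ) * ((((2 * M : ℕ) : ℝ) - 1) * (((2 * M : ℕ) : ℝ) - 2)))) := by
    rw [Finset.sum_congr rfl (fun σ _ => hexp σ)]
    simp only [Finset.sum_add_distrib, ← Finset.mul_sum]
    rw [pair i₁ j₁ d11', pair i₁ j₂ d12', pair i₂ j₁ d21', pair i₂ j₂ d22',
      triple i₁ j₁ j₂ d11' d12' d1'2', triple i₂ j₁ j₂ d21' d22' d1'2']
    ring
  have hm2 : empMoment (2 * M) u 2 = S2 / ((2 * M : ℕ) : ℝ) := by
    rw [empMoment, hS2]; ring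
  have hm4 : empMoment (2 * M) u 4 = S4 / ((2 * M : ℕ) : ℝ) := by
    rw [empMoment, hS4]; ring
  have hm6 : empMoment (2 * M) u 6 = S6 / ((2 * M : ℕ) : ℝ) := by
    rw [empMoment, hS6]; ring
  rw [permExpect, hsum, hm2, hm4, hm6, ← hK]
  have hx4 : (4 : ℝ) ≤ ((2 * M : ℕ) : ℝ) := by exact_mod_cast hn4
  generalize hg : ((2 * M : ℕ) : ℝ) = x at hx4 ⊢
  have hx0 : x ≠ 0 := by intro h; linarith
  have hx1 : x - 1 ≠ 0 := by intro h; linarith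
  have hx2 : x - 2 ≠ 0 := by intro h; linarith
  field_simp
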